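/- Let κ ≥ 4 and let h : [0, π] → ℝ be continuously differentiable on [0, π] and twice differentiable on (0, π), solving the profile equation h''(θ) + (cos θ / sin θ)·h'(θ) − sin(2h(θ))/(2 sin²θ) − (κ/2)·sin(2h(θ) − 2θ) = 0 on (0, π). Assume h is hemispheric of type (1,1), i.e. h(0) = h(π) = π and h(θ) + h(π − θ) = 2π for all θ ∈ [0, π], and that h satisfies the wedge condition π ≤ h(θ) ≤ π + θ for all θ ∈ [0, π/2]. Then h'(θ) ≤ 1 for all θ ∈ [0, π]. -/

import Mathlib

open Real Set

/-- A hemispheric critical profile of type (1,1) satisfying the first wedge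
    condition has derivative at most 1 everywhere, when κ ≥ 4. -/
theorem derivative_bound_first_type (κ : ℝ) (hκ : 4 ≤ κ) (h : ℝ → ℝ)
    (hC1 : ContDiffOn ℝ 1 h (Set.Icc 0 π))
    (hC2 : ∀ θ ∈ Set.Ioo (0 : ℝ) π, DifferentiableAt ℝ (deriv h) θ)
    (heq : ∀ θ ∈ Set.Ioo (0 : ℝ) π,
      deriv (deriv h) θ + (Real.cos θ / Real.sin θ) * deriv h θ
        - Real.sin (2 * h θ) / (2 * Real.sin θ ^ 2)
        - (κ / 2) * Real.sin (2 * h θ - 2 * θ) = 0)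
    (h0 : h 0 = π) (hπ : h π = π)
    (hsym : ∀ θ ∈ Set.Icc (0 : ℝ) π, h θ + h (π - θ) = 2 * π)
    (hwedge : ∀ θ ∈ Set.Icc (0 : ℝ) (π / 2), π ≤ h θ ∧ h θ ≤ π + θ) :
    ∀ θ ∈ Set.Icc (0 : ℝ) π, deriv h θ ≤ 1 := by
  have hπpos : (0:ℝ) < π := Real.pi_pos
  -- h is differentiable on the open interval
  have hdiff : ∀ t ∈ Set.Ioo (0:ℝ) π, DifferentiableAt ℝ h t := by
    intro t ht
    exact ((hC1.differentiableOn one_ne_zero) t ⟨ht.1.le, ht.2.le⟩).differentiableAt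
      (Icc_mem_nhds ht.1 ht.2)
  -- upper bound h t ≤ π + t on (0, π)
  have hub : ∀ t ∈ Set.Ioo (0:ℝ) π, h t ≤ π + t := by
    intro t ht
    by_cases hc : t ≤ π / 2
    · exact (hwedge t ⟨ht.1.le, hc⟩).2
    · have hmem : π - t ∈ Set.Icc (0:ℝ) (π/2) := ⟨by linarith [ht.2], by linarith [not_le.mp hc]⟩
      have hsx := hsym t ⟨ht.1.le, ht.2.le⟩
      have := (hwedge (π - t) hmem).1
      linarith [ht.1]
  -- lower bound t ≤ h t on (0, π)
  have hlb : ∀ t ∈ Set.Ioo (0:ℝ) π, t ≤ h t := by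
    intro t ht
    by_cases hc : t ≤ π / 2
    · have := (hwedge t ⟨ht.1.le, hc⟩).1
      linarith
    · have hmem : π - t ∈ Set.Icc (0:ℝ) (π/2) := ⟨by linarith [ht.2], by linarith [not_le.mp hc]⟩
      have hsx := hsym t ⟨ht.1.le, ht.2.le⟩
      have := (hwedge (π - t) hmem).2
      linarith
  -- the key interior bound on (0, π/2]
  have hkey : ∀ θ ∈ Set.Ioc (0:ℝ) (π/2), deriv h θ ≤ 1 := by
    intro θ hθ
    -- G = sin · (h' - 1), using derivWithin so it is continuous up to 0
    set g : ℝ → ℝ := derivWithin h (Set.Icc 0 π) with hg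
    set G : ℝ → ℝ := fun t => Real.sin t * (g t - 1) with hG
    have hgcont : ContinuousOn g (Set.Icc 0 π) :=
      hC1.continuousOn_derivWithin (uniqueDiffOn_Icc hπpos) le_rfl
    have hGcont : ContinuousOn G (Set.Icc 0 (π/2)) := by
      apply (Real.continuous_sin.continuousOn).mul
      exact ((hgcont.mono (Set.Icc_subset_Icc le_rfl (by linarith))).sub continuousOn_const)
    have hG0 : G 0 = 0 := by simp [hG]
    -- on the interior (0, π/2), G has nonpositive derivative
    have hGderiv : ∀ t ∈ Set.Ioo (0:ℝ) (π/2), DifferentiableAt ℝ G t ∧ deriv G t ≤ 0 := by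
      intro t ht
      have htI : t ∈ Set.Ioo (0:ℝ) π := ⟨ht.1, by linarith [ht.2]⟩
      have hs : 0 < Real.sin t := Real.sin_pos_of_pos_of_lt_pi htI.1 htI.2
      have hc : 0 ≤ Real.cos t := Real.cos_nonneg_of_mem_Icc ⟨by linarith [ht.1], ht.2.le⟩
      -- G agrees near t with F = sin · (deriv h - 1)
      have hFG : G =ᶠ[nhds t] (fun x => Real.sin x * (deriv h x - 1)) := by
        filter_upwards [Ioo_mem_nhds htI.1 htI.2] with x hx
        simp only [hG, hg, derivWithin_of_mem_nhds (Icc_mem_nhds hx.1 hx.2)]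
      -- derivative of F at t
      have hF : HasDerivAt (fun x => Real.sin x * (deriv h x - 1))
          (Real.cos t * (deriv h t - 1) + Real.sin t * deriv (deriv h) t) t := by
        exact (Real.hasDerivAt_sin t).mul (((hC2 t htI).hasDerivAt).sub_const 1)
      -- compute the value of the derivative via the ODE
      have hode := heq t htI
      have hd2 : deriv (deriv h) t = Real.sin (2 * h t) / (2 * Real.sin t ^ 2)
          + (κ / 2) * Real.sin (2 * h t - 2 * t) - (Real.cos t / Real.sin t) * deriv h t := by
        linarith
      set E : ℝ := - Real.cos t + Real.sin (2 * h t) / (2 * Real.sin t)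
          + (κ / 2) * Real.sin t * Real.sin (2 * h t - 2 * t) with hE
      have hval : Real.cos t * (deriv h t - 1) + Real.sin t * deriv (deriv h) t = E := by
        rw [hd2, hE]
        field_simp
        ring
      have hFE : HasDerivAt (fun x => Real.sin x * (deriv h x - 1)) E t := hval ▸ hF
      have hGE : HasDerivAt G E t := (Filter.EventuallyEq.hasDerivAt_iff hFG).mpr hFE
      -- now show E ≤ 0 using the wedge condition
      have hEneg : E ≤ 0 := by
        set φ : ℝ := h t - t - π with hφ
        have hw := hwedge t ⟨htI.1.le, ht.2.le⟩
        have hφ0 : φ ≤ 0 := by simp [hφ]; linarith [hw.2]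
        have hφlb : -t ≤ φ := by simp [hφ]; linarith [hw.1]
        have hsφ : Real.sin φ ≤ 0 :=
          Real.sin_nonpos_of_nonpos_of_neg_pi_le hφ0 (by linarith [ht.2])
        have hcφ : 0 ≤ Real.cos φ :=
          Real.cos_nonneg_of_mem_Icc ⟨by linarith [ht.2], by linarith⟩
        have h2h : 2 * h t = (2 * φ + 2 * t) + 2 * π := by rw [hφ]; ring
        have h2h' : 2 * h t - 2 * t = 2 * φ + 2 * π := by rw [hφ]; ring
        have e1 : Real.sin (2 * h t) = Real.sin (2 * φ + 2 * t) := by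
          rw [h2h, Real.sin_add_two_pi]
        have e2 : Real.sin (2 * h t - 2 * t) = Real.sin (2 * φ) := by
          rw [h2h', Real.sin_add_two_pi]
        have key : Real.sin t * E = Real.sin φ *
            (Real.cos φ * (1 + (κ - 2) * Real.sin t ^ 2)
              - 2 * Real.sin φ * Real.cos t * Real.sin t) := by
          rw [hE, e1, e2, Real.sin_add, Real.sin_two_mul, Real.sin_two_mul,
            Real.cos_two_mul', Real.cos_two_mul', Real.cos_sq', Real.cos_sq']
          field_simp
          ring
        have hbr : 0 ≤ Real.cos φ * (1 + (κ - 2) * Real.sin t ^ 2)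
            - 2 * Real.sin φ * Real.cos t * Real.sin t := by
          have h1 : 0 ≤ Real.cos φ * (1 + (κ - 2) * Real.sin t ^ 2) := by
            apply mul_nonneg hcφ
            nlinarith [sq_nonneg (Real.sin t)]
          nlinarith [mul_nonneg (mul_nonneg (neg_nonneg.mpr hsφ) hc) hs.le]
        have hmul : Real.sin t * E ≤ 0 := by
          rw [key]
          exact mul_nonpos_of_nonpos_of_nonneg hsφ hbr
        have hmul' : Real.sin t * E ≤ Real.sin t * 0 := by rwa [mul_zero]
        exact le_of_mul_le_mul_left hmul' hs
      exact ⟨hGE.differentiableAt, by rw [hGE.deriv]; exact hEneg⟩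
    -- G is antitone on [0, π/2]
    have hanti : AntitoneOn G (Set.Icc 0 (π/2)) := by
      apply antitoneOn_of_deriv_nonpos (convex_Icc _ _) hGcont
      · intro x hx
        rw [interior_Icc] at hx
        exact (hGderiv x hx).1.differentiableWithinAt
      · intro x hx
        rw [interior_Icc] at hx
        exact (hGderiv x hx).2
    have hGθ : G θ ≤ 0 := by
      have := hanti (Set.left_mem_Icc.mpr (by linarith)) ⟨hθ.1.le, hθ.2⟩ hθ.1.le
      rwa [hG0] at this
    have hθI : θ ∈ Set.Ioo (0:ℝ) π := ⟨hθ.1, by linarith [hθ.2]⟩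
    have hsθ : 0 < Real.sin θ := Real.sin_pos_of_pos_of_lt_pi hθI.1 hθI.2
    have hgθ : g θ = deriv h θ := derivWithin_of_mem_nhds (Icc_mem_nhds hθI.1 hθI.2)
    have hfin : Real.sin θ * (deriv h θ - 1) ≤ Real.sin θ * 0 := by
      rw [mul_zero, ← hgθ]; exact hGθ
    have := le_of_mul_le_mul_left hfin hsθ
    linarith
  -- symmetry of the derivative
  have hsymd : ∀ θ ∈ Set.Ioo (π/2) π, deriv h θ = deriv h (π - θ) := by
    intro θ hθ
    have hθI : θ ∈ Set.Ioo (0:ℝ) π := ⟨by linarith [hθ.1], hθ.2⟩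
    have hθ' : π - θ ∈ Set.Ioo (0:ℝ) π := ⟨by linarith [hθ.2], by linarith [hθ.1]⟩
    have hEq : h =ᶠ[nhds θ] (fun x => 2 * π - h (π - x)) := by
      filter_upwards [Icc_mem_nhds hθI.1 hθI.2] with x hx
      have := hsym x hx
      linarith
    have hDA : HasDerivAt (fun x => 2 * π - h (π - x)) (deriv h (π - θ)) θ := by
      have h1 : HasDerivAt (fun x : ℝ => π - x) (-1) θ := by
        simpa using (hasDerivAt_id θ).const_sub π
      have h2 : HasDerivAt (fun x => h (π - x)) (deriv h (π - θ) * (-1)) θ :=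
        ((hdiff _ hθ').hasDerivAt).comp θ h1
      have h3 := h2.const_sub (2 * π)
      simpa using h3
    rw [hEq.deriv_eq]
    exact hDA.deriv
  -- finish: case analysis
  intro θ hθ
  rcases eq_or_lt_of_le hθ.1 with h0' | hpos
  · -- θ = 0 : either h is not differentiable at 0 (deriv = 0), or slope estimate
    subst h0'
    by_cases hd : DifferentiableAt ℝ h 0
    · have hslope := hasDerivAt_iff_tendsto_slope.mp hd.hasDerivAt
      have hslope' : Filter.Tendsto (slope h 0) (nhdsWithin 0 (Set.Ioi 0)) (nhds (deriv h 0)) :=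
        hslope.mono_left (nhdsWithin_mono 0 (fun x hx => ne_of_gt hx))
      refine le_of_tendsto hslope' ?_
      filter_upwards [Ioo_mem_nhdsGT_of_mem (Set.mem_Ico.mpr ⟨le_rfl, hπpos⟩)] with t ht
      have hst : slope h 0 t = (h t - π) / t := by
        rw [slope_def_field, h0, sub_zero]
      rw [hst, div_le_one ht.1]
      linarith [hub t ht]
    · rw [deriv_zero_of_not_differentiableAt hd]; norm_num
  rcases eq_or_lt_of_le hθ.2 with hπ' | hlt
  · -- θ = π
    subst hπ'
    by_cases hd : DifferentiableAt ℝ h π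
    · have hslope := hasDerivAt_iff_tendsto_slope.mp hd.hasDerivAt
      have hslope' : Filter.Tendsto (slope h π) (nhdsWithin π (Set.Iio π)) (nhds (deriv h π)) :=
        hslope.mono_left (nhdsWithin_mono π (fun x hx => ne_of_lt hx))
      refine le_of_tendsto hslope' ?_
      filter_upwards [Ioo_mem_nhdsLT_of_mem (Set.mem_Ioc.mpr ⟨hπpos, le_rfl⟩)] with t ht
      have hst : slope h π t = (h t - π) / (t - π) := by
        rw [slope_def_field, hπ]
      rw [hst, div_le_one_iff]
      right; right
      exact ⟨by linarith [ht.2], by linarith [hlb t ht]⟩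
    · rw [deriv_zero_of_not_differentiableAt hd]; norm_num
  by_cases hhalf : θ ≤ π / 2
  · exact hkey θ ⟨hpos, hhalf⟩
  · rw [hsymd θ ⟨lt_of_not_ge hhalf, hlt⟩]
    exact hkey _ ⟨by linarith [hlt], by linarith [lt_of_not_ge hhalf]⟩
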